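/- Let (X, ‖·‖, ⪯) be a partially ordered Banach space in which all order intervals [a,→) = {x ∈ X : a ⪯ x} and (←,b] = {x ∈ X : x ⪯ b} are convex and closed, and assume X is uniformly convex. Let C be a nonempty convex closed bounded subset of X not reduced to one point, and let T : C → C be a continuous monotone asymptotic nonexpansive mapping. Then T has a fixed point if and only if there exists x₀ ∈ C such that x₀ and T(x₀) are comparable (i.e., x₀ ⪯ T(x₀) or T(x₀) ⪯ x₀). -/

import Mathlib

open Filter Topology



private lemma le_add_of_forall_pos' {a b : ℝ} (h : ∀ η > 0, a ≤ b + η) : a ≤ b := by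
  by_contra hab
  push_neg at hab
  have := h ((a - b) / 2) (by linarith)
  linarith

/-- Scaled version of uniform convexity. -/
private lemma uc_scaled {X : Type*} [NormedAddCommGroup X] [NormedSpace ℝ X]
    [UniformConvexSpace X] {R₀ ε : ℝ} (hR₀ : 0 < R₀) (hε : 0 < ε) :
    ∃ δ > 0, ∀ R : ℝ, 0 < R → R ≤ R₀ → ∀ x y : X, ‖x‖ ≤ R → ‖y‖ ≤ R →
      ε ≤ ‖x - y‖ → ‖x + y‖ ≤ (2 - δ) * R := by
  obtain ⟨δ, hδ, h⟩ := exists_forall_closed_ball_dist_add_le_two_sub X (div_pos hε hR₀)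
  refine ⟨δ, hδ, fun R hR hRR₀ x y hx hy hxy => ?_⟩
  have hRinv : (0:ℝ) ≤ R⁻¹ := (inv_pos.2 hR).le
  have hx' : ‖R⁻¹ • x‖ ≤ 1 := by
    rw [norm_smul_of_nonneg hRinv]
    calc R⁻¹ * ‖x‖ ≤ R⁻¹ * R := by gcongr
    _ = 1 := inv_mul_cancel₀ hR.ne'
  have hy' : ‖R⁻¹ • y‖ ≤ 1 := by
    rw [norm_smul_of_nonneg hRinv]
    calc R⁻¹ * ‖y‖ ≤ R⁻¹ * R := by gcongr
    _ = 1 := inv_mul_cancel₀ hR.ne'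
  have hxy' : ε / R₀ ≤ ‖R⁻¹ • x - R⁻¹ • y‖ := by
    rw [← smul_sub, norm_smul_of_nonneg hRinv]
    calc ε / R₀ ≤ ε / R := by gcongr
    _ ≤ ‖x - y‖ / R := by gcongr
    _ = R⁻¹ * ‖x - y‖ := div_eq_inv_mul _ _
  have hres := h hx' hy' hxy'
  rw [← smul_add, norm_smul_of_nonneg hRinv] at hres
  calc ‖x + y‖ = R * (R⁻¹ * ‖x + y‖) := by
        rw [← mul_assoc, mul_inv_cancel₀ hR.ne', one_mul]
  _ ≤ R * (2 - δ) := by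
        apply mul_le_mul_of_nonneg_left hres hR.le
  _ = (2 - δ) * R := mul_comm _ _



private lemma inter_nonempty {X : Type*} [NormedAddCommGroup X] [NormedSpace ℝ X]
    [CompleteSpace X] [UniformConvexSpace X]
    (S : ℕ → Set X) (hne : ∀ n, (S n).Nonempty) (hcl : ∀ n, IsClosed (S n))
    (hcv : ∀ n, Convex ℝ (S n)) (hanti : ∀ {n m : ℕ}, n ≤ m → S m ⊆ S n)
    (M : ℝ) (hM : ∀ n, ∀ x ∈ S n, ‖x‖ ≤ M) :
    (⋂ n, S n).Nonempty := by
  set r : ℕ → ℝ := fun n => Metric.infDist 0 (S n) with hrdef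
  have hrmono : Monotone r := fun n m hnm =>
    Metric.infDist_le_infDist_of_subset (hanti hnm) (hne m)
  have hrbdd : BddAbove (Set.range r) := by
    refine ⟨M, ?_⟩
    rintro t ⟨n, rfl⟩
    obtain ⟨x, hx⟩ := hne n
    calc r n ≤ dist 0 x := Metric.infDist_le_dist_of_mem hx
    _ = ‖x‖ := by rw [dist_comm, dist_zero_right]
    _ ≤ M := hM n x hx
  set R := ⨆ n, r n with hRdef
  have hrR : ∀ n, r n ≤ R := fun n => le_ciSup hrbdd n
  have hrtend : Tendsto r atTop (𝓝 R) := tendsto_atTop_ciSup hrmono hrbdd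
  have hchoice : ∀ n : ℕ, ∃ z ∈ S n, dist 0 z < r n + 1/((n:ℝ)+1) := by
    intro n
    refine (Metric.infDist_lt_iff (hne n)).1 ?_
    have : (0:ℝ) < 1/((n:ℝ)+1) := by positivity
    linarith
  choose y hyS hyd using hchoice
  have hynorm : ∀ n, ‖y n‖ ≤ r n + 1/((n:ℝ)+1) := by
    intro n
    have := hyd n
    rw [dist_comm, dist_zero_right] at this
    exact this.le
  have hRnonneg : 0 ≤ R := le_trans Metric.infDist_nonneg (hrR 0)
  have hCauchy : CauchySeq y := by
    rw [Metric.cauchySeq_iff]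
    intro ε hε
    rcases lt_or_ge R (ε/4) with hR4 | hR4
    · have hev : ∀ᶠ n : ℕ in atTop, (1:ℝ)/((n:ℝ)+1) < ε/4 - R := by
        have h0 : Tendsto (fun n : ℕ => (1:ℝ)/((n:ℝ)+1)) atTop (𝓝 0) :=
          tendsto_one_div_add_atTop_nhds_zero_nat
        exact h0.eventually_lt_const (by linarith)
      obtain ⟨N, hN⟩ := eventually_atTop.1 hev
      refine ⟨N, fun m hm n hn => ?_⟩
      have h1 := hynorm m
      have h2 := hynorm n
      have h3 := hN m hm
      have h4 := hN n hn
      have h5 := hrR m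
      have h6 := hrR n
      calc dist (y m) (y n) ≤ ‖y m‖ + ‖y n‖ := by
            rw [dist_eq_norm]; exact norm_sub_le _ _
      _ < ε := by linarith
    · have hRpos : 0 < R := lt_of_lt_of_le (by linarith) hR4
      obtain ⟨δ, hδ, hUC⟩ := uc_scaled (X := X) (R₀ := R + 1) (by linarith) hε
      have hev1 : ∀ᶠ n : ℕ in atTop, R - δ*R/8 < r n :=
        hrtend.eventually_const_lt (by nlinarith)
      have hev2 : ∀ᶠ n : ℕ in atTop, (1:ℝ)/((n:ℝ)+1) < δ*R/8 :=
        tendsto_one_div_add_atTop_nhds_zero_nat.eventually_lt_const (by positivity)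
      obtain ⟨N, hN⟩ := eventually_atTop.1 (hev1.and hev2)
      have key : ∀ n m, N ≤ n → n ≤ m → dist (y n) (y m) < ε := by
        intro n m hNn hnm
        by_contra hcon
        push_neg at hcon
        have hεd : ε ≤ ‖y n - y m‖ := by rw [← dist_eq_norm]; exact hcon
        have htn : (0:ℝ) < 1/((n:ℝ)+1) := by positivity
        have htn1 : (1:ℝ)/((n:ℝ)+1) ≤ 1 := by
          rw [div_le_one (by positivity)]
          have : (0:ℝ) ≤ (n:ℝ) := Nat.cast_nonneg n
          linarith
        have htmn : (1:ℝ)/((m:ℝ)+1) ≤ (1:ℝ)/((n:ℝ)+1) := by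
          apply div_le_div_of_nonneg_left (by norm_num) (by positivity)
          have : (n:ℝ) ≤ (m:ℝ) := Nat.cast_le.2 hnm
          linarith
        set z := (1/2:ℝ) • y n + (1/2:ℝ) • y m with hzdef
        have hzS : z ∈ S n :=
          (hcv n) (hyS n) (hanti hnm (hyS m)) (by norm_num) (by norm_num) (by norm_num)
        have hrz : r n ≤ ‖z‖ := by
          calc r n ≤ dist 0 z := Metric.infDist_le_dist_of_mem hzS
          _ = ‖z‖ := by rw [dist_comm, dist_zero_right]
        have hsum : y n + y m = (2:ℝ) • z := by
          rw [hzdef]; module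
        have h2z : ‖y n + y m‖ = 2 * ‖z‖ := by
          rw [hsum, norm_smul]; norm_num
        have hxR : ‖y n‖ ≤ R + 1/((n:ℝ)+1) := by
          have := hynorm n; have := hrR n; linarith
        have hyR : ‖y m‖ ≤ R + 1/((n:ℝ)+1) := by
          have := hynorm m; have := hrR m; linarith
        have hUCres := hUC (R + 1/((n:ℝ)+1)) (by linarith) (by linarith)
          (y n) (y m) hxR hyR hεd
        have hrn := (hN n hNn).1
        have htn2 := (hN n hNn).2
        nlinarith [hδ, hRpos]
      refine ⟨N, fun m hm n hn => ?_⟩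
      rcases le_total m n with h | h
      · exact key m n hm h
      · rw [dist_comm]; exact key n m hn h
  obtain ⟨z, hz⟩ := cauchySeq_tendsto_of_complete hCauchy
  refine ⟨z, Set.mem_iInter.2 fun n => ?_⟩
  apply (hcl n).mem_of_tendsto hz
  filter_upwards [eventually_ge_atTop n] with m hm using hanti hm (hyS m)


private lemma type_close {X : Type*} [NormedAddCommGroup X] [NormedSpace ℝ X]
    [UniformConvexSpace X]
    (a : ℕ → X) (K : Set X) (hKcv : Convex ℝ K)
    (M : ℝ) (hM : ∀ n, ∀ x ∈ K, dist (a n) x ≤ M)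
    (τ₀ : ℝ) (hτ₀ : 0 ≤ τ₀)
    (hτ₀le : ∀ x ∈ K, τ₀ ≤ limsup (fun n => dist (a n) x) atTop)
    {ε : ℝ} (hε : 0 < ε) :
    ∃ θ > 0, ∀ p ∈ K, ∀ q ∈ K,
      limsup (fun n => dist (a n) p) atTop < τ₀ + θ →
      limsup (fun n => dist (a n) q) atTop < τ₀ + θ → dist p q < ε := by
  have hbdd : ∀ x ∈ K, IsBoundedUnder (· ≤ ·) atTop (fun n => dist (a n) x) :=
    fun x hx => isBoundedUnder_of ⟨M, fun n => hM n x hx⟩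
  have hcob : ∀ x : X, IsCoboundedUnder (· ≤ ·) atTop (fun n => dist (a n) x) :=
    fun x => IsBoundedUnder.isCoboundedUnder_le (isBoundedUnder_of ⟨0, fun n => dist_nonneg⟩)
  rcases lt_or_ge τ₀ (ε/4) with h4 | h4
  · refine ⟨ε/4 - τ₀, by linarith, fun p hp q hq hpτ hqτ => ?_⟩
    have hp' : ∀ᶠ n in atTop, dist (a n) p < ε/4 :=
      eventually_lt_of_limsup_lt (by linarith) (hbdd p hp)
    have hq' : ∀ᶠ n in atTop, dist (a n) q < ε/4 :=
      eventually_lt_of_limsup_lt (by linarith) (hbdd q hq)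
    obtain ⟨n, hn1, hn2⟩ := (hp'.and hq').exists
    have h := dist_triangle p (a n) q
    rw [dist_comm p (a n)] at h
    linarith
  · have hτpos : 0 < τ₀ := lt_of_lt_of_le (by linarith) h4
    obtain ⟨δ, hδ, hUC⟩ := uc_scaled (X := X) (R₀ := τ₀ + 1) (by linarith) hε
    have hθpos : 0 < min (δ*τ₀/4) 1 := by positivity
    refine ⟨min (δ*τ₀/4) 1, hθpos, fun p hp q hq hpτ hqτ => ?_⟩
    set θ := min (δ*τ₀/4) 1 with hθdef
    have hθ1 : θ ≤ 1 := min_le_right _ _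
    have hθτ : θ ≤ δ*τ₀/4 := min_le_left _ _
    by_contra hcon
    push_neg at hcon
    set z := (1/2:ℝ) • p + (1/2:ℝ) • q with hzdef
    have hzK : z ∈ K := hKcv hp hq (by norm_num) (by norm_num) (by norm_num)
    have hfreq : ∃ᶠ n in atTop, τ₀ - θ < dist (a n) z :=
      frequently_lt_of_lt_limsup (hcob z)
        (lt_of_lt_of_le (by linarith) (hτ₀le z hzK))
    have hevp : ∀ᶠ n in atTop, dist (a n) p < τ₀ + θ :=
      eventually_lt_of_limsup_lt hpτ (hbdd p hp)
    have hevq : ∀ᶠ n in atTop, dist (a n) q < τ₀ + θ :=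
      eventually_lt_of_limsup_lt hqτ (hbdd q hq)
    obtain ⟨n, h1, h2, h3⟩ := (hfreq.and_eventually (hevp.and hevq)).exists
    have hx : ‖a n - p‖ ≤ τ₀ + θ := by rw [← dist_eq_norm]; exact h2.le
    have hy : ‖a n - q‖ ≤ τ₀ + θ := by rw [← dist_eq_norm]; exact h3.le
    have hxy : ε ≤ ‖(a n - p) - (a n - q)‖ := by
      have : (a n - p) - (a n - q) = q - p := by abel
      rw [this, ← dist_eq_norm, dist_comm]
      exact hcon
    have hsum := hUC (τ₀ + θ) (by linarith) (by linarith) _ _ hx hy hxy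
    have hsum2 : (a n - p) + (a n - q) = (2:ℝ) • (a n - z) := by
      rw [hzdef]; module
    have h2z : ‖(a n - p) + (a n - q)‖ = 2 * dist (a n) z := by
      rw [hsum2, norm_smul, dist_eq_norm]; norm_num
    rw [h2z] at hsum
    nlinarith [mul_pos hδ hθpos]




private lemma key_fixed_point {X : Type*} [NormedAddCommGroup X] [NormedSpace ℝ X]
    [CompleteSpace X] [UniformConvexSpace X]
    (le : X → X → Prop) (hrefl : ∀ x, le x x)
    (htrans : ∀ {x y z : X}, le x y → le y z → le x z)
    (hUp : ∀ a : X, Convex ℝ {x : X | le a x} ∧ IsClosed {x : X | le a x})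
    (C : Set X) (hCcl : IsClosed C) (hCconv : Convex ℝ C) (hCbd : Bornology.IsBounded C)
    (T : X → X) (hTC : Set.MapsTo T C C) (hTcont : ContinuousOn T C)
    (hTmono : ∀ x ∈ C, ∀ y ∈ C, le x y → le (T x) (T y))
    (k : ℕ → ℝ) (hkpos : ∀ n, 0 < k n) (hklim : Tendsto k atTop (𝓝 1))
    (hTane : ∀ n : ℕ, ∀ x ∈ C, ∀ y ∈ C, le x y → ‖T^[n] x - T^[n] y‖ ≤ k n * ‖x - y‖)
    (x₀ : X) (hx₀ : x₀ ∈ C) (hle₀ : le x₀ (T x₀)) : ∃ z ∈ C, T z = z := by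
  -- iterates stay in C and are monotone
  have hiterC : ∀ m : ℕ, ∀ x ∈ C, T^[m] x ∈ C := by
    intro m
    induction m with
    | zero => intro x hx; simpa using hx
    | succ m ih =>
      intro x hx
      rw [Function.iterate_succ_apply']
      exact hTC (ih x hx)
  have hitermono : ∀ m : ℕ, ∀ x ∈ C, ∀ y ∈ C, le x y → le (T^[m] x) (T^[m] y) := by
    intro m
    induction m with
    | zero => intro x _ y _ h; simpa using h
    | succ m ih =>
      intro x hx y hy h
      rw [Function.iterate_succ_apply', Function.iterate_succ_apply']
      exact hTmono _ (hiterC m x hx) _ (hiterC m y hy) (ih x hx y hy h)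
  set a : ℕ → X := fun n => T^[n] x₀ with hadef
  have haC : ∀ n, a n ∈ C := fun n => hiterC n x₀ hx₀
  have hstep : ∀ n, le (a n) (a (n+1)) := by
    intro n
    have h1 : a (n+1) = T^[n] (T x₀) := Function.iterate_succ_apply T n x₀
    rw [h1]
    exact hitermono n x₀ hx₀ (T x₀) (hTC hx₀) hle₀
  have hchain : ∀ {n m : ℕ}, n ≤ m → le (a n) (a m) := by
    intro n m h
    induction m, h using Nat.le_induction with
    | base => exact hrefl _
    | succ m hnm ih => exact htrans ih (hstep m)
  obtain ⟨M₀, hM₀⟩ := hCbd.exists_norm_le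
  have hdistC : ∀ x ∈ C, ∀ y ∈ C, dist x y ≤ M₀ + M₀ := by
    intro x hx y hy
    rw [dist_eq_norm]
    exact (norm_sub_le _ _).trans (add_le_add (hM₀ x hx) (hM₀ y hy))
  -- the set K of upper bounds of the orbit inside C
  set S : ℕ → Set X := fun n => C ∩ {x : X | le (a n) x} with hSdef
  have hSanti : ∀ {n m : ℕ}, n ≤ m → S m ⊆ S n :=
    fun hnm x hx => ⟨hx.1, htrans (hchain hnm) hx.2⟩
  have hKne : (⋂ n, S n).Nonempty := by
    apply inter_nonempty S
      (fun n => ⟨a n, haC n, hrefl _⟩)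
      (fun n => (hCcl.inter (hUp _).2))
      (fun n => (hCconv.inter (hUp _).1))
      hSanti M₀ (fun n x hx => hM₀ x hx.1)
  set K := ⋂ n, S n with hKdef
  have hKC : K ⊆ C := fun x hx => (Set.mem_iInter.1 hx 0).1
  have hKcl : IsClosed K := isClosed_iInter fun n => hCcl.inter (hUp _).2
  have hKcv : Convex ℝ K := convex_iInter fun n => hCconv.inter (hUp _).1
  have hKle : ∀ x ∈ K, ∀ n, le (a n) x := fun x hx n => (Set.mem_iInter.1 hx n).2
  have hTK : ∀ z ∈ K, ∀ m : ℕ, T^[m] z ∈ K := by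
    intro z hz m
    refine Set.mem_iInter.2 fun n => ⟨hiterC m z (hKC hz), ?_⟩
    rcases le_or_gt n m with hnm | hmn
    · have h1 : le (a m) (T^[m] z) := by
        have := hitermono m x₀ hx₀ z (hKC hz) (hKle z hz 0)
        exact this
      exact htrans (hchain hnm) h1
    · have h1 : a n = T^[m] (a (n - m)) := by
        rw [hadef]
        simp only
        rw [← Function.iterate_add_apply]
        congr 1
        omega
      rw [h1]
      exact hitermono m _ (haC _) z (hKC hz) (hKle z hz (n - m))
  -- the type function
  set τ : X → ℝ := fun x => limsup (fun n => dist (a n) x) atTop with hτdef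
  have hbdd : ∀ x : X, IsBoundedUnder (· ≤ ·) atTop (fun n => dist (a n) x) := by
    intro x
    refine isBoundedUnder_of ⟨M₀ + ‖x‖, fun n => ?_⟩
    rw [dist_eq_norm]
    exact (norm_sub_le _ _).trans (add_le_add (hM₀ _ (haC n)) le_rfl)
  have hcob : ∀ x : X, IsCoboundedUnder (· ≤ ·) atTop (fun n => dist (a n) x) :=
    fun x => IsBoundedUnder.isCoboundedUnder_le (isBoundedUnder_of ⟨0, fun n => dist_nonneg⟩)
  have hτnonneg : ∀ x, 0 ≤ τ x := fun x =>
    le_limsup_of_frequently_le (Frequently.of_forall fun n => dist_nonneg) (hbdd x)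
  set τ₀ : ℝ := sInf (τ '' K) with hτ₀def
  have himne : (τ '' K).Nonempty := hKne.image τ
  have himbdd : BddBelow (τ '' K) := by
    refine ⟨0, ?_⟩
    rintro t ⟨x, _, rfl⟩
    exact hτnonneg x
  have hτ₀le : ∀ x ∈ K, τ₀ ≤ τ x := fun x hx => csInf_le himbdd ⟨x, hx, rfl⟩
  have hτ₀nonneg : 0 ≤ τ₀ := by
    apply le_csInf himne
    rintro t ⟨x, _, rfl⟩
    exact hτnonneg x
  have hτLip : ∀ x y : X, τ x ≤ τ y + dist y x := by
    intro x y
    apply le_add_of_forall_pos'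
    intro η hη
    have hev : ∀ᶠ n in atTop, dist (a n) y < τ y + η :=
      eventually_lt_of_limsup_lt (by linarith) (hbdd y)
    refine limsup_le_of_le (hcob x) ?_
    filter_upwards [hev] with n hn
    calc dist (a n) x ≤ dist (a n) y + dist y x := dist_triangle _ _ _
    _ ≤ (τ y + dist y x) + η := by linarith
  have core : ∀ {ε : ℝ}, 0 < ε → ∃ θ > 0, ∀ p ∈ K, ∀ q ∈ K,
      τ p < τ₀ + θ → τ q < τ₀ + θ → dist p q < ε := by
    intro ε hε
    exact type_close a K hKcv (M₀ + M₀)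
      (fun n x hx => hdistC _ (haC n) _ (hKC hx)) τ₀ hτ₀nonneg hτ₀le hε
  -- a minimizing sequence
  have hex : ∀ j : ℕ, ∃ x ∈ K, τ x < τ₀ + 1/((j:ℝ)+1) := by
    intro j
    obtain ⟨t, ⟨x, hxK, rfl⟩, ht⟩ := Real.lt_sInf_add_pos himne
      (show (0:ℝ) < 1/((j:ℝ)+1) by positivity)
    exact ⟨x, hxK, ht⟩
  choose u huK hult using hex
  have hulim : Tendsto (fun j => τ (u j)) atTop (𝓝 τ₀) := by
    have hupper : Tendsto (fun j : ℕ => τ₀ + 1/((j:ℝ)+1)) atTop (𝓝 τ₀) := by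
      have := tendsto_const_nhds (x := τ₀) (f := atTop (α := ℕ)) |>.add
        tendsto_one_div_add_atTop_nhds_zero_nat
      simpa using this
    exact tendsto_of_tendsto_of_tendsto_of_le_of_le tendsto_const_nhds hupper
      (fun j => hτ₀le _ (huK j)) (fun j => (hult j).le)
  have hCauchy : CauchySeq u := by
    rw [Metric.cauchySeq_iff]
    intro ε hε
    obtain ⟨θ, hθ, hcl2⟩ := core hε
    obtain ⟨N, hN⟩ := eventually_atTop.1 (hulim.eventually_lt_const (by linarith : τ₀ < τ₀ + θ))
    exact ⟨N, fun m hm n hn => hcl2 _ (huK m) _ (huK n) (hN m hm) (hN n hn)⟩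
  obtain ⟨z, hz⟩ := cauchySeq_tendsto_of_complete hCauchy
  have hzK : z ∈ K := hKcl.mem_of_tendsto hz (Eventually.of_forall huK)
  have hzC : z ∈ C := hKC hzK
  have hτz : τ z = τ₀ := by
    refine le_antisymm ?_ (hτ₀le z hzK)
    have hub : ∀ j, τ z ≤ τ (u j) + dist (u j) z := fun j => hτLip z (u j)
    have hlim2 : Tendsto (fun j => τ (u j) + dist (u j) z) atTop (𝓝 (τ₀ + 0)) :=
      hulim.add (by simpa using hz.dist (tendsto_const_nhds (x := z)))
    rw [add_zero] at hlim2
    exact ge_of_tendsto hlim2 (Eventually.of_forall hub)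
  -- the iterates of z form a minimizing family
  have hiterτ : ∀ m : ℕ, τ (T^[m] z) ≤ k m * τ₀ := by
    intro m
    have h1 : ∀ η > 0, τ (T^[m] z) ≤ k m * (τ₀ + η) := by
      intro η hη
      have hev : ∀ᶠ n in atTop, dist (a n) z < τ₀ + η :=
        eventually_lt_of_limsup_lt (by rw [← hτz] at *; exact lt_of_le_of_lt le_rfl (by linarith [hτz]) ) (hbdd z)
      obtain ⟨N, hN⟩ := eventually_atTop.1 hev
      refine limsup_le_of_le (hcob _) (eventually_atTop.2 ⟨N + m, fun n hn => ?_⟩)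
      have hmn : m ≤ n := by omega
      have key1 : a n = T^[m] (a (n - m)) := by
        rw [hadef]; simp only
        rw [← Function.iterate_add_apply]
        congr 1
        omega
      calc dist (a n) (T^[m] z) = ‖T^[m] (a (n - m)) - T^[m] z‖ := by
            rw [dist_eq_norm, key1]
      _ ≤ k m * ‖a (n - m) - z‖ :=
            hTane m _ (haC _) z hzC (hKle z hzK (n - m))
      _ = k m * dist (a (n - m)) z := by rw [dist_eq_norm]
      _ ≤ k m * (τ₀ + η) :=
            mul_le_mul_of_nonneg_left (hN _ (by omega)).le (hkpos m).le
    apply le_add_of_forall_pos'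
    intro η hη
    have := h1 (η / k m) (div_pos hη (hkpos m))
    calc τ (T^[m] z) ≤ k m * (τ₀ + η / k m) := this
    _ = k m * τ₀ + η := by
          rw [mul_add, mul_div_cancel₀ _ (hkpos m).ne']
  -- the iterates converge to z
  have htend : Tendsto (fun m => T^[m] z) atTop (𝓝 z) := by
    rw [Metric.tendsto_atTop]
    intro ε hε
    obtain ⟨θ, hθ, hcl2⟩ := core hε
    have hk : Tendsto (fun m => k m * τ₀) atTop (𝓝 τ₀) := by
      have := hklim.mul_const τ₀
      simpa using this
    obtain ⟨N, hN⟩ := eventually_atTop.1 (hk.eventually_lt_const (by linarith : τ₀ < τ₀ + θ))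
    refine ⟨N, fun m hm => hcl2 _ (hTK z hzK m) _ hzK
      (lt_of_le_of_lt (hiterτ m) (hN m hm)) (by rw [hτz]; linarith)⟩
  -- conclude
  have h1 : Tendsto (fun m => T^[m] z) atTop (𝓝[C] z) :=
    tendsto_nhdsWithin_of_tendsto_nhds_of_eventually_within _ htend
      (Eventually.of_forall fun m => hKC (hTK z hzK m))
  have hTzlim : Tendsto (fun m => T^[m+1] z) atTop (𝓝 (T z)) := by
    have := ((hTcont z hzC).tendsto).comp h1
    simpa [Function.comp_def, Function.iterate_succ_apply'] using this
  have hTzlim2 : Tendsto (fun m => T^[m+1] z) atTop (𝓝 z) :=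
    htend.comp (tendsto_add_atTop_nat 1)
  exact ⟨z, hzC, tendsto_nhds_unique hTzlim hTzlim2⟩

/-- **Fixed point theorem for continuous monotone asymptotic nonexpansive mappings**
(Theorem 3.3 of the paper).  Let `X` be a uniformly convex Banach space endowed with a
partial order whose order intervals `[a,→)` and `(←,b]` are convex and closed, let `C` be a
nonempty convex closed bounded subset of `X` not reduced to one point, and let `T : C → C`
be a continuous monotone asymptotic nonexpansive mapping.  Then `T` has a fixed point
if and only if there exists `x₀ ∈ C` comparable with `T x₀`. -/
theorem fixedPoint_monotone_asymptotic_nonexpansive_continuous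
    {X : Type*} [NormedAddCommGroup X] [NormedSpace ℝ X] [CompleteSpace X]
    [UniformConvexSpace X] [PartialOrder X]
    (hIccUp : ∀ a : X, Convex ℝ {x : X | a ≤ x} ∧ IsClosed {x : X | a ≤ x})
    (hIccDown : ∀ b : X, Convex ℝ {x : X | x ≤ b} ∧ IsClosed {x : X | x ≤ b})
    (C : Set X) (hCne : C.Nonempty) (hCconv : Convex ℝ C) (hCcl : IsClosed C)
    (hCbd : Bornology.IsBounded C) (hCnontriv : ∃ a ∈ C, ∃ b ∈ C, a ≠ b)
    (T : X → X) (hTC : Set.MapsTo T C C)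
    (hTcont : ContinuousOn T C)
    (hTmono : ∀ x ∈ C, ∀ y ∈ C, x ≤ y → T x ≤ T y)
    (k : ℕ → ℝ) (hkpos : ∀ n, 0 < k n) (hklim : Tendsto k atTop (nhds 1))
    (hTane : ∀ n : ℕ, ∀ x ∈ C, ∀ y ∈ C, (x ≤ y ∨ y ≤ x) →
      ‖T^[n] x - T^[n] y‖ ≤ k n * ‖x - y‖) :
    (∃ z ∈ C, T z = z) ↔ (∃ x₀ ∈ C, x₀ ≤ T x₀ ∨ T x₀ ≤ x₀) := by
  constructor
  · rintro ⟨z, hzC, hz⟩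
    exact ⟨z, hzC, Or.inl (le_of_eq hz.symm)⟩
  · rintro ⟨x₀, hx₀, hcase | hcase⟩
    · exact key_fixed_point (fun x y => x ≤ y) (fun x => le_refl x)
        (fun h1 h2 => le_trans h1 h2) hIccUp C hCcl hCconv hCbd T hTC hTcont hTmono
        k hkpos hklim (fun n x hx y hy h => hTane n x hx y hy (Or.inl h)) x₀ hx₀ hcase
    · exact key_fixed_point (fun x y => y ≤ x) (fun x => le_refl x)
        (fun h1 h2 => le_trans h2 h1) (fun a => hIccDown a) C hCcl hCconv hCbd T hTC hTcont
        (fun x hx y hy h => hTmono y hy x hx h)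
        k hkpos hklim (fun n x hx y hy h => hTane n x hx y hy (Or.inr h)) x₀ hx₀ hcase
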